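/- Let Ω be a topological groupoid on B such that the target projection β : Ω → B is open. For each v ∈ B, suppose the map u ↦ φ(u) from B to ℝ satisfies: φ is an arbitrary function, and the map F(x) = φ(α(x)) − φ(β(x)) is continuous on Ω. If there exist u, v₀ ∈ B with v₀ in the orbit of u, v₀ ≠ u, and φ vanishes identically on some open neighborhood V₀ of v₀, then φ is continuous at u. -/
import Mathlib


/-- A groupoid on a base `B`: source `α`, target `β`, object inclusion `unit`,
partial multiplication `mul` (with axioms only required on composable pairs),
and inversion `inv`. -/
structure Gpd (Ω : Type*) (B : Type*) where
  α : Ω → B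
  β : Ω → B
  unit : B → Ω
  mul : Ω → Ω → Ω
  inv : Ω → Ω
  α_mul : ∀ x y, α x = β y → α (mul x y) = α y
  β_mul : ∀ x y, α x = β y → β (mul x y) = β x
  mul_assoc : ∀ x y z, α x = β y → α y = β z → mul (mul x y) z = mul x (mul y z)
  α_unit : ∀ u, α (unit u) = u
  β_unit : ∀ u, β (unit u) = u
  mul_unit : ∀ x, mul x (unit (α x)) = x
  unit_mul : ∀ x, mul (unit (β x)) x = x
  α_inv : ∀ x, α (inv x) = β x
  β_inv : ∀ x, β (inv x) = α x
  inv_mul : ∀ x, mul (inv x) x = unit (α x)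
  mul_inv : ∀ x, mul x (inv x) = unit (β x)

/-- Core of Theorem 4 (tF): if `β` is open, the coboundary
`F(x) = φ(α(x)) − φ(β(x))` is continuous, some `v₀ ≠ u` lies in the orbit of
`u`, and `φ` vanishes on a neighborhood of `v₀`, then `φ` is continuous at `u`. -/
theorem stmt17 {Ω B : Type*} [TopologicalSpace Ω] [TopologicalSpace B]
    (G : Gpd Ω B)
    (hα : Continuous G.α) (hβ : Continuous G.β) (hunit : Continuous G.unit)
    (hinv : Continuous G.inv)
    (hm : ContinuousOn (fun p : Ω × Ω => G.mul p.1 p.2) {p | G.α p.1 = G.β p.2})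
    (hβopen : IsOpenMap G.β)
    (φ : B → ℝ)
    (hF : Continuous (fun x : Ω => φ (G.α x) - φ (G.β x)))
    (u v₀ : B) (hne : v₀ ≠ u)
    (horb : ∃ x : Ω, G.β x = u ∧ G.α x = v₀)
    (V₀ : Set B) (hV₀ : IsOpen V₀) (hv₀ : v₀ ∈ V₀)
    (hvanish : ∀ w ∈ V₀, φ w = 0) :
    ContinuousAt φ u := by
  classical
  obtain ⟨x, hxβ, hxα⟩ := horb
  set g : Ω → ℝ := fun y => -(φ (G.α y) - φ (G.β y)) with hg
  have hgcont : Continuous g := hF.neg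
  have hgx : g x = φ u := by
    simp only [hg, hxα, hxβ, hvanish v₀ hv₀]; ring
  rw [ContinuousAt, Metric.tendsto_nhds]
  intro ε hε
  have h1 : ∀ᶠ y in nhds x, dist (g y) (g x) < ε :=
    (Metric.tendsto_nhds.mp (hgcont.continuousAt)) ε hε
  have h2 : ∀ᶠ y in nhds x, G.α y ∈ V₀ :=
    hα.continuousAt (hV₀.mem_nhds (hxα ▸ hv₀))
  obtain ⟨U, hUsub, hUopen, hxU⟩ := _root_.mem_nhds_iff.mp (h1.and h2)
  have hβU : G.β '' U ∈ nhds u :=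
    (hβopen U hUopen).mem_nhds ⟨x, hxU, hxβ⟩
  filter_upwards [hβU] with w hw
  obtain ⟨y, hyU, hyβ⟩ := hw
  obtain ⟨hd, hV⟩ := hUsub hyU
  have : φ w = g y := by
    simp only [hg, ← hyβ, hvanish _ hV]; ring
  rw [this, ← hgx]
  exact hd
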